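/- For the Schwarzschild metric functions A(r)² = 1 − 2M/r and C(r) = 1, the torsion scalar and boundary term of the complex tetrad satisfy T₂(r) = 4/r² and B₂(r) = 4/r² for all r > 2M > 0, where T₂ = 2(2rAA'+A²+C²)/(r²C²) and B₂ = 2(r²CA'² + rA(C(rA''+6A') − rA'C') + 2A²(C−rC'))/(r²C³). -/

import Mathlib

lemma derivA (M x : ℝ) (hM : 0 < M) (hx : 2 * M < x) :
    HasDerivAt (fun y => Real.sqrt (1 - 2 * M / y))
      (M / (x ^ 2 * Real.sqrt (1 - 2 * M / x))) x := by
  have hx0 : (0:ℝ) < x := lt_trans (by linarith) hx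
  have hxne : x ≠ 0 := hx0.ne'
  have hf : 0 < 1 - 2 * M / x := by
    rw [sub_pos, div_lt_one hx0]; exact hx
  have h1 : HasDerivAt (fun y : ℝ => 1 - 2 * M / y) (2 * M / x ^ 2) x := by
    have h := ((hasDerivAt_inv hxne).const_mul (2 * M)).const_sub 1
    have he : -(2 * M * -(x ^ 2)⁻¹) = 2 * M / x ^ 2 := by field_simp
    rw [he] at h
    simpa [div_eq_mul_inv] using h
  have h2 := (Real.hasDerivAt_sqrt hf.ne').comp x h1
  refine HasDerivAt.congr_deriv h2 ?_
  have hs0 : 0 < Real.sqrt (1 - 2 * M / x) := Real.sqrt_pos.mpr hf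
  field_simp

theorem stmt_3 (M : ℝ) (hM : 0 < M) (A C : ℝ → ℝ)
    (hA : ∀ r, A r = Real.sqrt (1 - 2 * M / r))
    (hC : ∀ r, C r = 1) :
    ∀ r : ℝ, r > 2 * M →
      (2 * (2 * r * A r * deriv A r + (A r) ^ 2 + (C r) ^ 2) / (r ^ 2 * (C r) ^ 2)
        = 4 / r ^ 2)
      ∧
      (2 * (r ^ 2 * C r * (deriv A r) ^ 2
          + r * A r * (C r * (r * deriv (deriv A) r + 6 * deriv A r)
            - r * deriv A r * deriv C r)
          + 2 * (A r) ^ 2 * (C r - r * deriv C r)) / (r ^ 2 * (C r) ^ 3)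
        = 4 / r ^ 2) := by
  have hAfun : A = fun y => Real.sqrt (1 - 2 * M / y) := funext hA
  have hCfun : C = fun _ => 1 := funext hC
  subst hAfun hCfun
  intro r hr
  have hr0 : (0:ℝ) < r := lt_trans (by linarith) hr
  have hrne : r ≠ 0 := hr0.ne'
  have hf : 0 < 1 - 2 * M / r := by rw [sub_pos, div_lt_one hr0]; exact hr
  set s := Real.sqrt (1 - 2 * M / r) with hsdef
  have hs0 : 0 < s := Real.sqrt_pos.mpr hf
  have hs : s ^ 2 = 1 - 2 * M / r := Real.sq_sqrt hf.le
  -- first derivative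
  have hdA : deriv (fun y => Real.sqrt (1 - 2 * M / y)) r = M / (r ^ 2 * s) :=
    (derivA M r hM hr).deriv
  -- deriv A eventually equals g on Ioi (2M)
  have hEq : deriv (fun y => Real.sqrt (1 - 2 * M / y)) =ᶠ[nhds r]
      (fun y => M / (y ^ 2 * Real.sqrt (1 - 2 * M / y))) := by
    filter_upwards [Ioi_mem_nhds hr] with x hx
    exact (derivA M x hM hx).deriv
  -- derivative of g
  have hg : HasDerivAt (fun y => M / (y ^ 2 * Real.sqrt (1 - 2 * M / y)))
      (M * (-(2 * r * s + M / s) / (r ^ 2 * s) ^ 2)) r := by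
    have hh : HasDerivAt (fun y => y ^ 2 * Real.sqrt (1 - 2 * M / y))
        ((2 : ℕ) * r ^ 1 * s + r ^ 2 * (M / (r ^ 2 * s))) r :=
      (hasDerivAt_pow 2 r).mul (derivA M r hM hr)
    have hhne : r ^ 2 * s ≠ 0 := by positivity
    have h := (hh.inv hhne).const_mul M
    have he : M * (-(((2:ℕ):ℝ) * r ^ 1 * s + r ^ 2 * (M / (r ^ 2 * s))) / (r ^ 2 * s) ^ 2)
        = M * (-(2 * r * s + M / s) / (r ^ 2 * s) ^ 2) := by
      field_simp
      ring
    rw [he] at h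
    simpa [div_eq_mul_inv] using h
  have hdd : deriv (deriv (fun y => Real.sqrt (1 - 2 * M / y))) r
      = M * (-(2 * r * s + M / s) / (r ^ 2 * s) ^ 2) := by
    rw [Filter.EventuallyEq.deriv_eq hEq]
    exact hg.deriv
  have hdC : deriv (fun _ : ℝ => (1:ℝ)) r = 0 := deriv_const r 1
  have hs' : r * s ^ 2 = r - 2 * M := by
    rw [hs]; field_simp
  simp only [hdA, hdd, hdC]
  rw [← hsdef]
  constructor
  · field_simp
    linear_combination 2 * hs'
  · field_simp
    linear_combination (4 * r * s ^ 2) * hs'
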